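/- Let P = {p_1 < p_2 < ... < p_n} be points on a line, and let T be a minimum-weight sink tree rooted at p_x (x ∈ {i,j}) in the complete directed graph on P_{[i,j]} with weights w as above. Then for any two distinct edges (p_k, p_l) and (p_{k'}, p_{l'}) of T: if k < l' < l then k < k' < l. -/
import Mathlib


/-- Edge weight on the line: `w(p_a, p_b)` computed with respect to the point set
`P_{[lo,hi]} = {p_lo, …, p_hi}`. -/
noncomputable def lineWeight (p : ℕ → ℝ) (lo hi a b : ℕ) : ℕ :=
  ((Finset.Icc lo hi).filter (fun z => z ≠ a ∧ |p a - p z| ≤ |p a - p b|)).card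

/-- `par` encodes a spanning sink tree rooted at `p_x` on the vertex set `P_{[i,j]}`. -/
def IsSinkTreeOn (i j x : ℕ) (par : ℕ → ℕ) : Prop :=
  par x = x ∧ (∀ k ∈ Finset.Icc i j, k ≠ x → par k ∈ Finset.Icc i j ∧ par k ≠ k) ∧
    ∀ k ∈ Finset.Icc i j, ∃ m : ℕ, par^[m] k = x

/-- Total weight of the sink tree encoded by `par` on vertex set `P_{[a,b]}`, with edge
weights computed with respect to the ambient point set `P_{[lo,hi]}`. -/
noncomputable def sinkTreeWeight (p : ℕ → ℝ) (lo hi a b x : ℕ) (par : ℕ → ℕ) : ℕ :=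
  ∑ k ∈ (Finset.Icc a b).erase x, lineWeight p lo hi k (par k)

lemma no_cycle {par : ℕ → ℕ} {x u : ℕ} (hx : par x = x) (hu : u ≠ x)
    (hreach : ∃ m, par^[m] u = x) {s : ℕ} (hs : 0 < s) (hcyc : par^[s] u = u) : False := by
  obtain ⟨m, hm⟩ := hreach
  have hcyc' : par^[s * m] u = u := by
    rw [Function.iterate_mul]
    exact Function.iterate_fixed hcyc m
  have hge : m ≤ s * m := Nat.le_mul_of_pos_left m hs
  have : par^[s * m] u = x := by
    have : par^[s * m - m + m] u = x := by
      rw [Function.iterate_add_apply, hm]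
      exact Function.iterate_fixed hx _
    rwa [Nat.sub_add_cancel hge] at this
  exact hu (hcyc' ▸ this)

lemma update_iterate_eq {par : ℕ → ℕ} {a b : ℕ} :
    ∀ m v, (∀ t, t < m → par^[t] v ≠ a) → (Function.update par a b)^[m] v = par^[m] v := by
  intro m
  induction m with
  | zero => simp
  | succ m ih =>
    intro v hv
    rw [Function.iterate_succ_apply, Function.iterate_succ_apply,
      Function.update_of_ne (by simpa using hv 0 (Nat.succ_pos m))]
    exact ih (par v) (fun t ht => by
      have := hv (t + 1) (Nat.succ_lt_succ ht)
      rwa [Function.iterate_succ_apply] at this)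

lemma isSinkTree_update {i j x : ℕ} {par : ℕ → ℕ} (hT : IsSinkTreeOn i j x par)
    {a b : ℕ} (hax : a ≠ x) (hb : b ∈ Finset.Icc i j)
    (hba : b ≠ a) (hnp : ∀ t, par^[t] b ≠ a) :
    IsSinkTreeOn i j x (Function.update par a b) := by
  obtain ⟨h1, h2, h3⟩ := hT
  refine ⟨?_, ?_, ?_⟩
  · rw [Function.update_of_ne (Ne.symm hax)]; exact h1
  · intro v hv hvx
    by_cases hva : v = a
    · subst hva
      rw [Function.update_self]
      exact ⟨hb, hba⟩
    · rw [Function.update_of_ne hva]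
      exact h2 v hv hvx
  · intro v hv
    obtain ⟨m, hm⟩ := h3 v hv
    clear hv
    induction m generalizing v with
    | zero => exact ⟨0, hm⟩
    | succ m ih =>
      by_cases hva : v = a
      · subst hva
        obtain ⟨mb, hmb⟩ := h3 b hb
        refine ⟨mb + 1, ?_⟩
        rw [Function.iterate_succ_apply, Function.update_self,
          update_iterate_eq mb b (fun t _ => hnp t)]
        exact hmb
      · obtain ⟨m', hm'⟩ := ih (par v) (by rwa [Function.iterate_succ_apply] at hm)
        exact ⟨m' + 1, by rw [Function.iterate_succ_apply, Function.update_of_ne hva]; exact hm'⟩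

lemma lineWeight_lt {p : ℕ → ℝ} {i j a b c w : ℕ}
    (hw : w ∈ Finset.Icc i j) (hwa : w ≠ a)
    (hbw : |p a - p b| < |p a - p w|) (hwc : |p a - p w| ≤ |p a - p c|) :
    lineWeight p i j a b < lineWeight p i j a c := by
  apply Finset.card_lt_card
  rw [Finset.ssubset_iff_of_subset]
  · exact ⟨w, Finset.mem_filter.2 ⟨hw, hwa, hwc⟩, fun h => by
      have := (Finset.mem_filter.1 h).2.2
      linarith⟩
  · intro z hz
    obtain ⟨hz1, hz2, hz3⟩ := Finset.mem_filter.1 hz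
    exact Finset.mem_filter.2 ⟨hz1, hz2, le_trans hz3 (le_trans hbw.le hwc)⟩

/-- Exchange argument: replacing the parent of `a` by `b` with a strictly shorter edge
(witnessed by `w`) gives a strictly lighter sink tree, contradicting minimality. -/
lemma exchange {p : ℕ → ℝ} {i j x : ℕ} {par : ℕ → ℕ} (hT : IsSinkTreeOn i j x par)
    (hmin : ∀ par' : ℕ → ℕ, IsSinkTreeOn i j x par' →
      sinkTreeWeight p i j i j x par ≤ sinkTreeWeight p i j i j x par')
    {a b w : ℕ} (ha : a ∈ Finset.Icc i j) (hax : a ≠ x) (hb : b ∈ Finset.Icc i j)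
    (hba : b ≠ a) (hnp : ∀ t, par^[t] b ≠ a)
    (hw : w ∈ Finset.Icc i j) (hwa : w ≠ a)
    (hbw : |p a - p b| < |p a - p w|) (hwc : |p a - p w| ≤ |p a - p (par a)|) : False := by
  have hT' := isSinkTree_update hT hax hb hba hnp
  have hA : a ∈ (Finset.Icc i j).erase x := Finset.mem_erase.2 ⟨hax, ha⟩
  have e1 : sinkTreeWeight p i j i j x (Function.update par a b)
      = lineWeight p i j a b
        + ∑ z ∈ ((Finset.Icc i j).erase x).erase a, lineWeight p i j z (par z) := by
    unfold sinkTreeWeight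
    rw [← Finset.add_sum_erase _ _ hA]
    congr 1
    · rw [Function.update_self]
    · exact Finset.sum_congr rfl fun z hz => by
        rw [Function.update_of_ne (Finset.ne_of_mem_erase hz)]
  have e2 : sinkTreeWeight p i j i j x par
      = lineWeight p i j a (par a)
        + ∑ z ∈ ((Finset.Icc i j).erase x).erase a, lineWeight p i j z (par z) := by
    unfold sinkTreeWeight
    rw [← Finset.add_sum_erase _ _ hA]
  have hlt : lineWeight p i j a b < lineWeight p i j a (par a) :=
    lineWeight_lt hw hwa hbw hwc
  have := hmin _ hT'
  omega

lemma abs_lt_of_lt_lt {p : ℕ → ℝ} (hp : StrictMono p) {a u v : ℕ}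
    (h1 : a < u) (h2 : u < v) : |p a - p u| < |p a - p v| := by
  have g1 := hp h1
  have g2 := hp h2
  rw [abs_sub_comm, abs_of_pos (by linarith), abs_sub_comm, abs_of_pos (by linarith)]
  linarith

lemma abs_lt_of_gt_gt {p : ℕ → ℝ} (hp : StrictMono p) {a u v : ℕ}
    (h1 : v < u) (h2 : u < a) : |p a - p u| < |p a - p v| := by
  have g1 := hp h1
  have g2 := hp h2
  rw [abs_of_pos (by linarith), abs_of_pos (by linarith)]
  linarith

/-- non-crossing property (ii) of a minimum-weight sink tree on points on a
line: for distinct edges `(p_k, p_l)` and `(p_{k'}, p_{l'})` of the tree (so `l = par k`,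
`l' = par k'`), if `k < l' < l` then `k < k' < l`. -/
theorem minWeight_sinkTree_noncrossing_ii
    (p : ℕ → ℝ) (hp : StrictMono p) (i j x : ℕ) (hij : i ≤ j) (hx : x = i ∨ x = j)
    (par : ℕ → ℕ) (hT : IsSinkTreeOn i j x par)
    (hmin : ∀ par' : ℕ → ℕ, IsSinkTreeOn i j x par' →
      sinkTreeWeight p i j i j x par ≤ sinkTreeWeight p i j i j x par')
    (k k' : ℕ) (hk : k ∈ Finset.Icc i j) (hk' : k' ∈ Finset.Icc i j)
    (hkx : k ≠ x) (hk'x : k' ≠ x) (hne : k ≠ k')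
    (h1 : k < par k') (h2 : par k' < par k) :
    k < k' ∧ k' < par k := by
  obtain ⟨hpx, hpar, hreach⟩ := hT
  have hT' : IsSinkTreeOn i j x par := ⟨hpx, hpar, hreach⟩
  obtain ⟨hlmem, hlne⟩ := hpar k hk hkx
  obtain ⟨hl'mem, hl'ne⟩ := hpar k' hk' hk'x
  by_contra hcon
  push_neg at hcon
  -- either k' < k (case A) or par k ≤ k' (case B)
  have hcase : k' < k ∨ par k ≤ k' := by
    rcases Nat.lt_or_ge k' k with h | h
    · exact Or.inl h
    · right
      have : k < k' := lt_of_le_of_ne h hne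
      exact hcon this
  by_cases hF1 : ∃ t, par^[t] (par k') = k
  · -- rerouting k to par k' would create a cycle; reroute the other edge instead
    obtain ⟨t₁, ht₁⟩ := hF1
    rcases hcase with hA | hB
    · -- case A: k' < k; set par' k' := k
      have hnp2 : ∀ t, par^[t] k ≠ k' := by
        intro t₂ ht₂
        have hcyc : par^[t₂ + (t₁ + 1)] k' = k' := by
          rw [Function.iterate_add_apply, Function.iterate_succ_apply, ht₁, ht₂]
        exact no_cycle hpx hk'x (hreach k' hk') (by omega) hcyc
      exact exchange hT' hmin hk' hk'x hk hne hnp2 hl'mem hl'ne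
        (abs_lt_of_lt_lt hp hA h1) le_rfl
    · -- case B: par k ≤ k'; set par' k' := par k
      have hnp2 : ∀ t, par^[t] (par k) ≠ k' := by
        intro t₂ ht₂
        have hcyc : par^[(t₁ + 1) + (t₂ + 1)] k = k := by
          have e1 : par^[t₂ + 1] k = k' := by
            rw [Function.iterate_succ_apply]; exact ht₂
          have e2 : par^[t₁ + 1] k' = k := by
            rw [Function.iterate_succ_apply]; exact ht₁
          rw [Function.iterate_add_apply, e1, e2]
        exact no_cycle hpx hkx (hreach k hk) (by omega) hcyc
      have hlk' : par k ≠ k' := hnp2 0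
      exact exchange hT' hmin hk' hk'x hlmem hlk' hnp2 hl'mem hl'ne
        (abs_lt_of_gt_gt hp h2 (lt_of_le_of_ne hB hlk')) le_rfl
  · -- reroute k to par k'
    push_neg at hF1
    have hl'k : par k' ≠ k := fun h => hF1 0 h
    exact exchange hT' hmin hk hkx hl'mem hl'k hF1 hlmem hlne
      (abs_lt_of_lt_lt hp h1 h2) le_rfl
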